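/- Let A be a unital complex Banach algebra, let D, η ∈ A, let d ∈ ℝ be a scalar, and set h := d·1 + η. Then cosh(dD)·cosh(Dη) + sinh(dD)·sinh(Dη) = cosh(Dh), where cosh(dD) := Σ_{n≥0} d^{2n}D^{2n}/(2n)!, sinh(dD) := Σ_{n≥0} d^{2n+1}D^{2n+1}/(2n+1)!, cosh(Dη) := Σ_{n≥0} D^{2n}η^{2n}/(2n)!, sinh(Dη) := Σ_{n≥0} D^{2n+1}η^{2n+1}/(2n+1)!, and cosh(Dh) := Σ_{n≥0} D^{2n}h^{2n}/(2n)! (all series converge absolutely; the order of the factors matters since D and η need not commute). -/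

import Mathlib

open scoped Nat

section Aux

variable {A : Type*} [NormedRing A] [NormedAlgebra ℂ A] [CompleteSpace A]

/-- Norm-summability of the general ordered exponential-type series. -/
lemma aux_summable_norm (D E : A) (z : ℂ) :
    Summable fun i : ℕ => ‖(z ^ i / (i ! : ℂ)) • (D ^ i * E ^ i)‖ := by
  have hb : Summable fun i : ℕ =>
      (max 1 ‖(1 : A)‖ * max 1 ‖(1 : A)‖) * ((‖z‖ * ‖D‖ * ‖E‖) ^ i / i !) :=
    (Real.summable_pow_div_factorial _).mul_left _
  refine hb.of_nonneg_of_le (fun _ => norm_nonneg _) fun i => ?_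
  have h1 : ‖(z ^ i / (i ! : ℂ)) • (D ^ i * E ^ i)‖
      = (‖z‖ ^ i / i !) * ‖D ^ i * E ^ i‖ := by
    rw [norm_smul, norm_div, norm_pow, Complex.norm_natCast]
  rw [h1]
  have hDE : ‖D ^ i * E ^ i‖ ≤ (max 1 ‖(1 : A)‖ * max 1 ‖(1 : A)‖) * (‖D‖ ^ i * ‖E‖ ^ i) := by
    rcases Nat.eq_zero_or_pos i with hi | hi
    · subst hi
      simp only [pow_zero, mul_one, one_mul]
      calc ‖(1 : A)‖ ≤ max 1 ‖(1 : A)‖ := le_max_right _ _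
        _ ≤ max 1 ‖(1 : A)‖ * max 1 ‖(1 : A)‖ :=
          le_mul_of_one_le_right (le_trans zero_le_one (le_max_left _ _)) (le_max_left _ _)
    · calc ‖D ^ i * E ^ i‖ ≤ ‖D ^ i‖ * ‖E ^ i‖ := norm_mul_le _ _
        _ ≤ ‖D‖ ^ i * ‖E‖ ^ i :=
            mul_le_mul (norm_pow_le' D hi) (norm_pow_le' E hi) (norm_nonneg _)
              (pow_nonneg (norm_nonneg _) _)
        _ ≤ (max 1 ‖(1 : A)‖ * max 1 ‖(1 : A)‖) * (‖D‖ ^ i * ‖E‖ ^ i) := by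
            refine le_mul_of_one_le_left (by positivity) ?_
            exact one_le_mul_of_one_le_of_one_le (le_max_left _ _) (le_max_left _ _)
  calc ‖z‖ ^ i / i ! * ‖D ^ i * E ^ i‖
      ≤ ‖z‖ ^ i / i ! * ((max 1 ‖(1 : A)‖ * max 1 ‖(1 : A)‖) * (‖D‖ ^ i * ‖E‖ ^ i)) :=
        mul_le_mul_of_nonneg_left hDE (by positivity)
    _ = (max 1 ‖(1 : A)‖ * max 1 ‖(1 : A)‖) * ((‖z‖ * ‖D‖ * ‖E‖) ^ i / i !) := by
        rw [mul_pow, mul_pow]; ring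

lemma aux_summable_norm_a (D : A) (z : ℂ) :
    Summable fun i : ℕ => ‖(z ^ i / (i ! : ℂ)) • D ^ i‖ := by
  have := aux_summable_norm D (1 : A) z
  simpa only [one_pow, mul_one] using this

lemma aux_summable_norm_b (D E : A) :
    Summable fun i : ℕ => ‖((i ! : ℂ))⁻¹ • (D ^ i * E ^ i)‖ := by
  have := aux_summable_norm D E 1
  simpa only [one_pow, one_div] using this

/-- The Cauchy-product term is the binomially-expanded depth term. -/
lemma aux_cauchy (D η : A) (z : ℂ) (k : ℕ) :
    ∑ p ∈ Finset.HasAntidiagonal.antidiagonal k,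
        ((z ^ p.1 / (p.1 ! : ℂ)) • D ^ p.1) * (((p.2 ! : ℂ))⁻¹ • (D ^ p.2 * η ^ p.2))
      = ((k ! : ℂ))⁻¹ • (D ^ k * (z • (1 : A) + η) ^ k) := by
  have hcomm : Commute (z • (1 : A)) η := (Commute.one_left η).smul_left z
  rw [Finset.Nat.sum_antidiagonal_eq_sum_range_succ_mk, hcomm.add_pow,
    Finset.mul_sum, Finset.smul_sum]
  refine Finset.sum_congr rfl fun m hm => ?_
  have hmk : m ≤ k := Nat.lt_succ_iff.mp (Finset.mem_range.mp hm)
  have hcast : ((k.choose m : ℕ) : A) = ((k.choose m : ℂ)) • (1 : A) := by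
    rw [← map_natCast (algebraMap ℂ A) (k.choose m), Algebra.algebraMap_eq_smul_one]
  -- RHS term simplification
  have hterm : (z • (1 : A)) ^ m * η ^ (k - m) * ((k.choose m : ℕ) : A)
      = ((k.choose m : ℂ) * z ^ m) • η ^ (k - m) := by
    rw [hcast, smul_pow, one_pow, smul_mul_assoc, one_mul, mul_smul_comm, mul_one,
      smul_smul]
  have hR : ((k ! : ℂ))⁻¹ • (D ^ k * ((z • (1 : A)) ^ m * η ^ (k - m) * ((k.choose m : ℕ) : A)))
      = ((k ! : ℂ)⁻¹ * ((k.choose m : ℂ) * z ^ m)) • (D ^ k * η ^ (k - m)) := by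
    rw [hterm, mul_smul_comm, smul_smul]
  have hL : ((z ^ m / (m ! : ℂ)) • D ^ m) * ((((k - m)! : ℂ))⁻¹ • (D ^ (k - m) * η ^ (k - m)))
      = ((z ^ m / (m ! : ℂ)) * (((k - m)! : ℂ))⁻¹) • (D ^ k * η ^ (k - m)) := by
    rw [smul_mul_assoc, mul_smul_comm, smul_smul, ← mul_assoc, pow_mul_pow_sub D hmk]
  dsimp only
  rw [hL, hR]
  congr 1
  rw [Nat.cast_choose ℂ hmk]
  have hkm : ((k - m)! : ℂ) ≠ 0 := Nat.cast_ne_zero.mpr (Nat.factorial_ne_zero _)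
  have hm' : ((m)! : ℂ) ≠ 0 := Nat.cast_ne_zero.mpr (Nat.factorial_ne_zero _)
  have hk' : ((k)! : ℂ) ≠ 0 := Nat.cast_ne_zero.mpr (Nat.factorial_ne_zero _)
  field_simp

end Aux

/-- Constant-depth identity `cosh(dD)·cosh(Dη) + sinh(dD)·sinh(Dη) = cosh(Dh)`
in a unital complex Banach algebra, with `h = d·1 + η`. -/
theorem stmt_0 (A : Type*) [NormedRing A] [NormedAlgebra ℂ A] [CompleteSpace A]
    (D η : A) (d : ℝ) (h : A) (hdef : h = (d : ℂ) • (1 : A) + η) :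
    (Summable fun n : ℕ => ‖((d : ℂ) ^ (2 * n) / ((2 * n)! : ℂ)) • D ^ (2 * n)‖) ∧
    (Summable fun n : ℕ => ‖((d : ℂ) ^ (2 * n + 1) / ((2 * n + 1)! : ℂ)) • D ^ (2 * n + 1)‖) ∧
    (Summable fun n : ℕ => ‖(((2 * n)! : ℂ))⁻¹ • (D ^ (2 * n) * η ^ (2 * n))‖) ∧
    (Summable fun n : ℕ => ‖(((2 * n + 1)! : ℂ))⁻¹ • (D ^ (2 * n + 1) * η ^ (2 * n + 1))‖) ∧
    (Summable fun n : ℕ => ‖(((2 * n)! : ℂ))⁻¹ • (D ^ (2 * n) * h ^ (2 * n))‖) ∧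
    (∑' n : ℕ, ((d : ℂ) ^ (2 * n) / ((2 * n)! : ℂ)) • D ^ (2 * n)) *
        (∑' n : ℕ, (((2 * n)! : ℂ))⁻¹ • (D ^ (2 * n) * η ^ (2 * n))) +
      (∑' n : ℕ, ((d : ℂ) ^ (2 * n + 1) / ((2 * n + 1)! : ℂ)) • D ^ (2 * n + 1)) *
        (∑' n : ℕ, (((2 * n + 1)! : ℂ))⁻¹ • (D ^ (2 * n + 1) * η ^ (2 * n + 1))) =
      ∑' n : ℕ, (((2 * n)! : ℂ))⁻¹ • (D ^ (2 * n) * h ^ (2 * n)) := by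
  subst hdef
  set z : ℂ := (d : ℂ) with hz
  -- basic series
  set a : ℕ → A := fun i => (z ^ i / (i ! : ℂ)) • D ^ i with ha
  set b : ℕ → A := fun j => ((j ! : ℂ))⁻¹ • (D ^ j * η ^ j) with hb
  set a' : ℕ → A := fun i => ((-1 : ℂ) ^ i) • a i with ha'
  set b' : ℕ → A := fun j => ((-1 : ℂ) ^ j) • b j with hb'
  have hinj2 : Function.Injective fun n : ℕ => 2 * n := fun x y hxy => by dsimp at hxy; omega
  have hinj2' : Function.Injective fun n : ℕ => 2 * n + 1 := fun x y hxy => by dsimp at hxy; omega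
  have hsa : Summable fun i => ‖a i‖ := aux_summable_norm_a D z
  have hsb : Summable fun j => ‖b j‖ := aux_summable_norm_b D η
  have hna' : ∀ i, ‖a' i‖ = ‖a i‖ := fun i => by
    rw [ha', norm_smul, norm_pow, norm_neg, norm_one, one_pow, one_mul]
  have hnb' : ∀ j, ‖b' j‖ = ‖b j‖ := fun j => by
    rw [hb', norm_smul, norm_pow, norm_neg, norm_one, one_pow, one_mul]
  have hsa' : Summable fun i => ‖a' i‖ := by simpa only [hna'] using hsa
  have hsb' : Summable fun j => ‖b' j‖ := by simpa only [hnb'] using hsb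
  -- the Cauchy product terms
  set c : ℕ → A := fun k => ((k ! : ℂ))⁻¹ • (D ^ k * (z • (1 : A) + η) ^ k) with hc
  have hcauchy : ∀ k, ∑ p ∈ Finset.HasAntidiagonal.antidiagonal k, a p.1 * b p.2 = c k :=
    fun k => aux_cauchy D η z k
  have hcauchy' : ∀ k, ∑ p ∈ Finset.HasAntidiagonal.antidiagonal k, a' p.1 * b' p.2 = ((-1 : ℂ) ^ k) • c k := by
    intro k
    rw [← hcauchy k, Finset.smul_sum]
    refine Finset.sum_congr rfl fun p hp => ?_
    have hpk : p.1 + p.2 = k := Finset.HasAntidiagonal.mem_antidiagonal.mp hp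
    rw [ha', hb', smul_mul_assoc, mul_smul_comm, smul_smul, ← pow_add, hpk]
  have hsc : Summable fun k => ‖c k‖ := by
    have := summable_norm_sum_mul_antidiagonal_of_summable_norm hsa hsb
    simpa only [hcauchy] using this
  -- summable statements
  have hsc_even : Summable fun n : ℕ => ‖c (2 * n)‖ := hsc.comp_injective hinj2
  refine ⟨(hsa.comp_injective hinj2 : _), (hsa.comp_injective hinj2' : _),
    (hsb.comp_injective hinj2 : _), (hsb.comp_injective hinj2' : _), hsc_even, ?_⟩
  -- main identity
  have hsumc : Summable c := hsc.of_norm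
  have hsumc' : Summable fun k => ((-1 : ℂ) ^ k) • c k := by
    refine Summable.of_norm ?_
    have : ∀ k, ‖((-1 : ℂ) ^ k) • c k‖ = ‖c k‖ := fun k => by
      rw [norm_smul, norm_pow, norm_neg, norm_one, one_pow, one_mul]
    simpa only [this] using hsc
  -- even/odd splits of total sums
  have hAe : Summable fun n => a (2 * n) := (hsa.comp_injective hinj2).of_norm
  have hAo : Summable fun n => a (2 * n + 1) := (hsa.comp_injective hinj2').of_norm
  have hBe : Summable fun n => b (2 * n) := (hsb.comp_injective hinj2).of_norm
  have hBo : Summable fun n => b (2 * n + 1) := (hsb.comp_injective hinj2').of_norm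
  set Ae := ∑' n, a (2 * n) with hAe'
  set Ao := ∑' n, a (2 * n + 1) with hAo'
  set Be := ∑' n, b (2 * n) with hBe'
  set Bo := ∑' n, b (2 * n + 1) with hBo'
  have hsplit_a : (∑' k, a k) = Ae + Ao := (tsum_even_add_odd hAe hAo).symm
  have hsplit_b : (∑' k, b k) = Be + Bo := (tsum_even_add_odd hBe hBo).symm
  have heven_pow : ∀ n : ℕ, ((-1 : ℂ) ^ (2 * n)) = 1 := fun n => by
    rw [pow_mul, neg_one_sq, one_pow]
  have hodd_pow : ∀ n : ℕ, ((-1 : ℂ) ^ (2 * n + 1)) = -1 := fun n => by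
    rw [pow_succ, heven_pow, one_mul]
  have ha'e : ∀ n, a' (2 * n) = a (2 * n) := fun n => by
    show ((-1 : ℂ) ^ (2 * n)) • a (2 * n) = a (2 * n)
    rw [heven_pow, one_smul]
  have ha'o : ∀ n, a' (2 * n + 1) = -a (2 * n + 1) := fun n => by
    show ((-1 : ℂ) ^ (2 * n + 1)) • a (2 * n + 1) = -a (2 * n + 1)
    rw [hodd_pow, neg_one_smul]
  have hb'e : ∀ n, b' (2 * n) = b (2 * n) := fun n => by
    show ((-1 : ℂ) ^ (2 * n)) • b (2 * n) = b (2 * n)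
    rw [heven_pow, one_smul]
  have hb'o : ∀ n, b' (2 * n + 1) = -b (2 * n + 1) := fun n => by
    show ((-1 : ℂ) ^ (2 * n + 1)) • b (2 * n + 1) = -b (2 * n + 1)
    rw [hodd_pow, neg_one_smul]
  have hsplit_a' : (∑' k, a' k) = Ae - Ao := by
    have h1 : Summable fun n => a' (2 * n) := by simpa only [ha'e] using hAe
    have h2 : Summable fun n => a' (2 * n + 1) := by simpa only [ha'o] using hAo.neg
    rw [← tsum_even_add_odd h1 h2]
    simp only [ha'e, ha'o]
    rw [tsum_neg, hAe', hAo', sub_eq_add_neg]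
  have hsplit_b' : (∑' k, b' k) = Be - Bo := by
    have h1 : Summable fun n => b' (2 * n) := by simpa only [hb'e] using hBe
    have h2 : Summable fun n => b' (2 * n + 1) := by simpa only [hb'o] using hBo.neg
    rw [← tsum_even_add_odd h1 h2]
    simp only [hb'e, hb'o]
    rw [tsum_neg, hBe', hBo', sub_eq_add_neg]
  -- Cauchy products
  have hP : (Ae + Ao) * (Be + Bo) = ∑' k, c k := by
    rw [← hsplit_a, ← hsplit_b, tsum_mul_tsum_eq_tsum_sum_antidiagonal_of_summable_norm hsa hsb]
    exact tsum_congr hcauchy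
  have hP' : (Ae - Ao) * (Be - Bo) = ∑' k, ((-1 : ℂ) ^ k) • c k := by
    rw [← hsplit_a', ← hsplit_b',
      tsum_mul_tsum_eq_tsum_sum_antidiagonal_of_summable_norm hsa' hsb']
    exact tsum_congr hcauchy'
  -- combine
  have hcomb : (∑' k, c k) + (∑' k, ((-1 : ℂ) ^ k) • c k)
      = ∑' k, (c k + ((-1 : ℂ) ^ k) • c k) := (Summable.tsum_add hsumc hsumc').symm
  set F : ℕ → A := fun k => c k + ((-1 : ℂ) ^ k) • c k with hF
  have hFe : ∀ n, F (2 * n) = c (2 * n) + c (2 * n) := fun n => by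
    show c (2 * n) + ((-1 : ℂ) ^ (2 * n)) • c (2 * n) = c (2 * n) + c (2 * n)
    rw [heven_pow, one_smul]
  have hFo : ∀ n, F (2 * n + 1) = 0 := fun n => by
    show c (2 * n + 1) + ((-1 : ℂ) ^ (2 * n + 1)) • c (2 * n + 1) = 0
    rw [hodd_pow, neg_one_smul, add_neg_cancel]
  have hce : Summable fun n => c (2 * n) := hsc_even.of_norm
  have hFsum : (∑' k, F k) = (∑' n, c (2 * n)) + (∑' n, c (2 * n)) := by
    have h1 : Summable fun n => F (2 * n) := by simpa only [hFe] using hce.add hce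
    have h2 : Summable fun n => F (2 * n + 1) := by
      simpa only [hFo] using summable_zero
    rw [← tsum_even_add_odd h1 h2]
    simp only [hFe, hFo, tsum_zero, add_zero]
    rw [Summable.tsum_add hce hce]
  -- put it together
  have key : (Ae * Be + Ao * Bo) + (Ae * Be + Ao * Bo)
      = (∑' n, c (2 * n)) + (∑' n, c (2 * n)) := by
    have expand : (Ae + Ao) * (Be + Bo) + (Ae - Ao) * (Be - Bo)
        = (Ae * Be + Ao * Bo) + (Ae * Be + Ao * Bo) := by noncomm_ring
    rw [← expand, hP, hP', hcomb, hFsum]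
  have final : Ae * Be + Ao * Bo = ∑' n, c (2 * n) := by
    have h2 : (2 : ℂ) • (Ae * Be + Ao * Bo) = (2 : ℂ) • (∑' n, c (2 * n)) := by
      rw [two_smul, two_smul]; exact key
    exact smul_right_injective A two_ne_zero h2
  exact final
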